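/- Let F : ℝ^d → ℝ be differentiable, λ-strongly convex with G-Lipschitz gradient (λ ≤ G), and minimizer w*. Let η = 1/G, and suppose at each step t the update is w^{t+1} = w^t − η·g^t where ‖g^t − ∇F(w^t)‖ ≤ Δ for all t. Let κ = 1 − λ/(G + λ). Then for all T ≥ 0, ‖w^T − w*‖ ≤ κ^T·‖w^0 − w*‖ + (Δ/G)·∑_{k=0}^{T−1} κ^k ≤ κ^T·‖w^0 − w*‖ + (Δ/G)·(G + λ)/λ. -/

import Mathlib

set_option maxHeartbeats 1000000

open Finset

open RealInnerProductSpace in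
/-- Descent lemma: a differentiable function with `G`-Lipschitz gradient satisfies the
quadratic upper bound. -/
private lemma my_descent {d : ℕ} (F : EuclideanSpace ℝ (Fin d) → ℝ) (G : ℝ)
    (hdiff : Differentiable ℝ F)
    (hsmooth : ∀ x y, ‖gradient F x - gradient F y‖ ≤ G * ‖x - y‖) :
    ∀ x y, F y ≤ F x + ⟪gradient F x, y - x⟫ + G / 2 * ‖y - x‖ ^ 2 := by
  intro x y
  set v := y - x with hv
  set φ : ℝ → ℝ := fun t =>
    F (x + t • v) - t * ⟪gradient F x, v⟫ - G / 2 * t ^ 2 * ‖v‖ ^ 2 with hφ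
  have key : ∀ t : ℝ,
      HasDerivAt φ (⟪gradient F (x + t • v), v⟫ - ⟪gradient F x, v⟫ - G * t * ‖v‖ ^ 2) t := by
    intro t
    have h1 : HasDerivAt (fun t : ℝ => x + t • v) v t := by
      simpa using ((hasDerivAt_id t).smul_const v).const_add x
    have h2 : HasFDerivAt F
        ((InnerProductSpace.toDual ℝ _) (gradient F (x + t • v))) (x + t • v) :=
      (hdiff (x + t • v)).hasGradientAt.hasFDerivAt
    have h3 : HasDerivAt (fun t : ℝ => F (x + t • v)) ⟪gradient F (x + t • v), v⟫ t := by
      have := h2.comp_hasDerivAt t h1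
      simp only [InnerProductSpace.toDual_apply_apply] at this
      exact this
    have h4 : HasDerivAt (fun t : ℝ => t * ⟪gradient F x, v⟫) ⟪gradient F x, v⟫ t := by
      simpa using (hasDerivAt_id t).mul_const ⟪gradient F x, v⟫
    have h5 : HasDerivAt (fun t : ℝ => G / 2 * t ^ 2 * ‖v‖ ^ 2) (G * t * ‖v‖ ^ 2) t := by
      have := ((hasDerivAt_pow 2 t).const_mul (G / 2)).mul_const (‖v‖ ^ 2)
      refine this.congr_deriv ?_
      ring
    exact (h3.sub h4).sub h5
  obtain ⟨c, hc, hceq⟩ := exists_hasDerivAt_eq_slope φ _ (by norm_num : (0:ℝ) < 1)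
    (fun t _ => (key t).continuousAt.continuousWithinAt) (fun t ht => key t)
  have hder_le : ⟪gradient F (x + c • v), v⟫ - ⟪gradient F x, v⟫ - G * c * ‖v‖ ^ 2 ≤ 0 := by
    have h1 : ⟪gradient F (x + c • v), v⟫ - ⟪gradient F x, v⟫
        = ⟪gradient F (x + c • v) - gradient F x, v⟫ := by rw [inner_sub_left]
    have h2 : ⟪gradient F (x + c • v) - gradient F x, v⟫
        ≤ ‖gradient F (x + c • v) - gradient F x‖ * ‖v‖ := real_inner_le_norm _ _
    have h3 : ‖gradient F (x + c • v) - gradient F x‖ ≤ G * (c * ‖v‖) := by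
      have := hsmooth (x + c • v) x
      simpa [norm_smul, Real.norm_eq_abs, abs_of_pos hc.1] using this
    have hc0 : 0 < c := hc.1
    nlinarith [norm_nonneg v, mul_le_mul_of_nonneg_right h3 (norm_nonneg v)]
  have hφ1 : φ 1 - φ 0 ≤ 0 := by
    have : φ 1 - φ 0 = (⟪gradient F (x + c • v), v⟫ - ⟪gradient F x, v⟫ - G * c * ‖v‖ ^ 2) := by
      rw [hceq]; ring
    linarith [hder_le, this.le, this.ge]
  have e1 : x + (1:ℝ) • v = y := by simp [hv]
  have e0 : x + (0:ℝ) • v = x := by simp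
  simp only [hφ, e1, e0] at hφ1
  nlinarith [hφ1]

open RealInnerProductSpace in
/-- Co-coercivity for a convex function with a quadratic upper bound. -/
private lemma my_coco {d : ℕ} (φ : EuclideanSpace ℝ (Fin d) → ℝ)
    (D : EuclideanSpace ℝ (Fin d) → EuclideanSpace ℝ (Fin d)) (L : ℝ) (hL : 0 < L)
    (hlow : ∀ x y, φ x + ⟪D x, y - x⟫ ≤ φ y)
    (hup : ∀ x y, φ y ≤ φ x + ⟪D x, y - x⟫ + L / 2 * ‖y - x‖ ^ 2) :
    ∀ x y, (1 / L) * ‖D x - D y‖ ^ 2 ≤ ⟪D x - D y, x - y⟫ := by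
  have half : ∀ x y : EuclideanSpace ℝ (Fin d),
      (1 / (2 * L)) * ‖D y - D x‖ ^ 2 ≤ φ y - φ x - ⟪D x, y - x⟫ := by
    intro x y
    set c := D y - D x with hc
    set z := y - (1 / L) • c with hz
    have h1 := hlow x z
    have h2 := hup y z
    have e1 : z - y = -((1 / L) • c) := by rw [hz]; abel
    have e2 : z - x = (y - x) - (1 / L) • c := by rw [hz]; abel
    have i1 : ⟪D y, z - y⟫ = -((1 / L) * ⟪D y, c⟫) := by
      rw [e1, inner_neg_right, real_inner_smul_right]
    have i2 : ⟪D x, z - x⟫ = ⟪D x, y - x⟫ - (1 / L) * ⟪D x, c⟫ := by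
      rw [e2, inner_sub_right, real_inner_smul_right]
    have n1 : ‖z - y‖ ^ 2 = (1 / L) ^ 2 * ‖c‖ ^ 2 := by
      rw [e1, norm_neg, norm_smul, Real.norm_eq_abs, mul_pow, sq_abs]
    have i3 : ⟪D y, c⟫ - ⟪D x, c⟫ = ‖c‖ ^ 2 := by
      rw [← inner_sub_left, ← hc, real_inner_self_eq_norm_sq]
    have hL' : L ≠ 0 := ne_of_gt hL
    rw [i2] at h1
    rw [i1, n1] at h2
    have chain := le_trans h1 h2
    have e3 : L / 2 * ((1 / L) ^ 2 * ‖c‖ ^ 2) = 1 / (2 * L) * ‖c‖ ^ 2 := by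
      field_simp
    have e4 : (1:ℝ) / L * inner ℝ (D y) c - 1 / L * inner ℝ (D x) c = 1 / L * ‖c‖ ^ 2 := by
      rw [← mul_sub, i3]
    have e5 : (1:ℝ) / L * ‖c‖ ^ 2 = 2 * (1 / (2 * L) * ‖c‖ ^ 2) := by
      field_simp
    linarith [chain, e3, e4, e5]
  intro x y
  have hxy := half x y
  have hyx := half y x
  have hn : ‖D x - D y‖ = ‖D y - D x‖ := norm_sub_rev _ _
  have hi : ⟪D x - D y, x - y⟫ = - ⟪D x, y - x⟫ - ⟪D y, x - y⟫ := by
    rw [inner_sub_left]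
    have a1 : ⟪D x, x - y⟫ = - ⟪D x, y - x⟫ := by rw [← inner_neg_right, neg_sub]
    have a2 : ⟪D y, x - y⟫ = ⟪D y, x - y⟫ := rfl
    linarith [a1]
  have hnn : ‖D x - D y‖ ^ 2 = ‖D y - D x‖ ^ 2 := by rw [hn]
  have hsum : (1 / L) * ‖D y - D x‖ ^ 2 ≤ - ⟪D x, y - x⟫ - ⟪D y, x - y⟫ := by
    have : (1 / (2 * L)) * ‖D y - D x‖ ^ 2 + (1 / (2 * L)) * ‖D x - D y‖ ^ 2
        = (1 / L) * ‖D y - D x‖ ^ 2 := by rw [hnn]; field_simp; ring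
    linarith [hxy, hyx, this.le, this.ge]
  rw [hi, hnn]
  exact hsum

/-- Inexact gradient descent convergence for strongly convex smooth functions. -/
theorem stmt3 (d : ℕ) (F : EuclideanSpace ℝ (Fin d) → ℝ) (lam G Δ : ℝ)
    (hlam : 0 < lam) (hG : 0 < G) (hlamG : lam ≤ G) (hΔ : 0 ≤ Δ)
    (hdiff : Differentiable ℝ F)
    (hsc : ∀ x y, F y ≥ F x + (inner ℝ (gradient F x) (y - x) : ℝ) + (lam / 2) * ‖y - x‖ ^ 2)
    (hsmooth : ∀ x y, ‖gradient F x - gradient F y‖ ≤ G * ‖x - y‖)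
    (wstar : EuclideanSpace ℝ (Fin d)) (hmin : ∀ w, F wstar ≤ F w)
    (w : ℕ → EuclideanSpace ℝ (Fin d)) (gt : ℕ → EuclideanSpace ℝ (Fin d))
    (hupd : ∀ t, w (t + 1) = w t - (1 / G) • gt t)
    (herr : ∀ t, ‖gt t - gradient F (w t)‖ ≤ Δ) :
    ∀ T : ℕ,
      ‖w T - wstar‖ ≤
          (1 - lam / (G + lam)) ^ T * ‖w 0 - wstar‖ +
            (Δ / G) * ∑ k ∈ Finset.range T, (1 - lam / (G + lam)) ^ k ∧
      ‖w T - wstar‖ ≤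
          (1 - lam / (G + lam)) ^ T * ‖w 0 - wstar‖ + (Δ / G) * ((G + lam) / lam) := by
  classical
  -- notation
  set κ : ℝ := 1 - lam / (G + lam) with hκdef
  have hGlam : (0:ℝ) < G + lam := by linarith
  have hκ0 : 0 ≤ κ := by
    rw [hκdef]
    have : lam / (G + lam) ≤ 1 := by
      rw [div_le_one hGlam]; linarith
    linarith
  have hκG : 1 - lam / G ≤ κ := by
    rw [hκdef]
    have : lam / (G + lam) ≤ lam / G :=
      div_le_div_of_nonneg_left hlam.le hG (by linarith)
    linarith
  have hsG : (0:ℝ) ≤ 1 - lam / G := by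
    have : lam / G ≤ 1 := by rw [div_le_one hG]; exact hlamG
    linarith
  -- gradient at minimizer is zero
  have gradstar : gradient F wstar = 0 := by
    have hloc : IsLocalMin F wstar := Filter.Eventually.of_forall hmin
    rw [gradient, hloc.fderiv_eq_zero, map_zero]
  -- descent lemma
  have hdesc := my_descent F G hdiff hsmooth
  -- strong monotonicity
  have hmono : ∀ x y : EuclideanSpace ℝ (Fin d),
      lam * ‖x - y‖ ^ 2 ≤ (inner ℝ (gradient F x - gradient F y) (x - y) : ℝ) := by
    intro x y
    have h1 := hsc x y
    have h2 := hsc y x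
    have e1 : (inner ℝ (gradient F x) (y - x) : ℝ) = - (inner ℝ (gradient F x) (x - y) : ℝ) := by
      rw [← inner_neg_right, neg_sub]
    have e2 : ‖y - x‖ = ‖x - y‖ := norm_sub_rev _ _
    have e3 : (inner ℝ (gradient F x - gradient F y) (x - y) : ℝ)
        = (inner ℝ (gradient F x) (x - y) : ℝ) - (inner ℝ (gradient F y) (x - y) : ℝ) := by
      rw [inner_sub_left]
    rw [e2] at h1
    nlinarith [h1, h2, e1.le, e1.ge, e3.le, e3.ge]
  -- the key one-step contraction
  have key : ∀ x : EuclideanSpace ℝ (Fin d),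
      ‖(x - (1 / G) • gradient F x) - wstar‖ ≤ (1 - lam / G) * ‖x - wstar‖ := by
    intro x
    set v : EuclideanSpace ℝ (Fin d) := x - wstar with hvdef
    set a : EuclideanSpace ℝ (Fin d) := gradient F x with hadef
    set b : EuclideanSpace ℝ (Fin d) := a - lam • v with hbdef
    have hmono' : lam * ‖v‖ ^ 2 ≤ (inner ℝ a v : ℝ) := by
      have := hmono x wstar
      rw [gradstar, sub_zero] at this
      exact this
    have hbv0 : (0:ℝ) ≤ (inner ℝ b v : ℝ) := by
      have e : (inner ℝ b v : ℝ) = (inner ℝ a v : ℝ) - lam * ‖v‖ ^ 2 := by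
        rw [hbdef, inner_sub_left, real_inner_smul_left, real_inner_self_eq_norm_sq]
      rw [e]; linarith
    have hcoco : ‖b‖ ^ 2 ≤ (G - lam) * (inner ℝ b v : ℝ) := by
      rcases eq_or_lt_of_le hlamG with heq | hlt
      · -- G = lam : b = 0
        have ha : ‖a‖ ≤ G * ‖v‖ := by
          have := hsmooth x wstar
          rw [gradstar, sub_zero] at this
          exact this
        have hb2 : ‖b‖ ^ 2 = ‖a‖ ^ 2 - 2 * (lam * (inner ℝ a v : ℝ)) + lam ^ 2 * ‖v‖ ^ 2 := by
          rw [hbdef, norm_sub_sq_real, real_inner_smul_right, norm_smul, Real.norm_eq_abs,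
            abs_of_pos hlam, mul_pow]
        have ha2 : ‖a‖ ^ 2 ≤ G ^ 2 * ‖v‖ ^ 2 := by
          nlinarith [norm_nonneg a, norm_nonneg v, ha]
        rw [← heq] at ha2 ⊢
        have hb0 : ‖b‖ ^ 2 ≤ 0 := by nlinarith [hmono']
        nlinarith [hbv0, hb0]
      · -- lam < G : use co-coercivity of F - lam/2 ‖·‖²
        set φ : EuclideanSpace ℝ (Fin d) → ℝ := fun z => F z - lam / 2 * ‖z‖ ^ 2 with hφdef
        set D : EuclideanSpace ℝ (Fin d) → EuclideanSpace ℝ (Fin d) :=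
          fun z => gradient F z - lam • z with hDdef
        have hid : ∀ p q : EuclideanSpace ℝ (Fin d),
            ‖q‖ ^ 2 = ‖p‖ ^ 2 + 2 * (inner ℝ p (q - p) : ℝ) + ‖q - p‖ ^ 2 := by
          intro p q
          have := norm_add_sq_real p (q - p)
          simpa using this
        have hDinner : ∀ p q : EuclideanSpace ℝ (Fin d),
            (inner ℝ (D p) (q - p) : ℝ)
              = (inner ℝ (gradient F p) (q - p) : ℝ) - lam * (inner ℝ p (q - p) : ℝ) := by
          intro p q
          rw [hDdef]
          simp only
          rw [inner_sub_left, real_inner_smul_left]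
        have hlow : ∀ p q, φ p + (inner ℝ (D p) (q - p) : ℝ) ≤ φ q := by
          intro p q
          have h1 := hsc p q
          have h2 := hid p q
          have h3 := hDinner p q
          simp only [hφdef]
          nlinarith [h1, h2, h3]
        have hup : ∀ p q, φ q ≤ φ p + (inner ℝ (D p) (q - p) : ℝ)
            + (G - lam) / 2 * ‖q - p‖ ^ 2 := by
          intro p q
          have h1 := hdesc p q
          have h2 := hid p q
          have h3 := hDinner p q
          simp only [hφdef]
          nlinarith [h1, h2, h3]
        have hcc := my_coco φ D (G - lam) (by linarith) hlow hup x wstar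
        have hDeq : D x - D wstar = b := by
          rw [hDdef]
          simp only [gradstar, hbdef, hadef, hvdef]
          rw [smul_sub]
          abel
        rw [hDeq] at hcc
        have hL : (0:ℝ) < G - lam := by linarith
        calc ‖b‖ ^ 2 = (G - lam) * ((1 / (G - lam)) * ‖b‖ ^ 2) := by
              field_simp
          _ ≤ (G - lam) * (inner ℝ b v : ℝ) :=
              mul_le_mul_of_nonneg_left hcc hL.le
    -- expand the norm
    have hvec : x - (1 / G) • gradient F x - wstar = (1 - lam / G) • v - (1 / G) • b := by
      rw [hbdef, hadef, hvdef]
      match_scalars <;> field_simp <;> ring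
    have hexp : ‖(1 - lam / G) • v - (1 / G) • b‖ ^ 2
        = (1 - lam / G) ^ 2 * ‖v‖ ^ 2
          - 2 * ((1 - lam / G) * (1 / G) * (inner ℝ v b : ℝ)) + (1 / G) ^ 2 * ‖b‖ ^ 2 := by
      rw [norm_sub_sq_real, real_inner_smul_left, real_inner_smul_right,
        norm_smul, norm_smul, Real.norm_eq_abs, Real.norm_eq_abs,
        abs_of_nonneg hsG, abs_of_nonneg (by positivity : (0:ℝ) ≤ 1 / G), mul_pow, mul_pow]
      ring
    have hvb : (inner ℝ v b : ℝ) = (inner ℝ b v : ℝ) := real_inner_comm _ _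
    have hsq : ‖(1 - lam / G) • v - (1 / G) • b‖ ^ 2 ≤ ((1 - lam / G) * ‖v‖) ^ 2 := by
      rw [hexp, hvb]
      have hcoef : (1 - lam / G) * (1 / G) = (G - lam) / G ^ 2 := by
        have hG' : (G:ℝ) ≠ 0 := ne_of_gt hG
        have e : (G - lam) / G = 1 - lam / G := by rw [sub_div, div_self hG']
        rw [← e, div_mul_div_comm, mul_one, sq]
      have h1 : (1 / G) ^ 2 * ‖b‖ ^ 2 ≤ (1 / G) ^ 2 * ((G - lam) * (inner ℝ b v : ℝ)) :=
        mul_le_mul_of_nonneg_left hcoco (by positivity)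
      have h2 : 2 * ((G - lam) / G ^ 2 * (inner ℝ b v : ℝ))
          ≥ (1 / G) ^ 2 * ((G - lam) * (inner ℝ b v : ℝ)) := by
        have hGL : (0:ℝ) ≤ G - lam := by linarith
        have : (1 / G) ^ 2 * ((G - lam) * (inner ℝ b v : ℝ))
            = (G - lam) / G ^ 2 * (inner ℝ b v : ℝ) := by
          rw [one_div, inv_pow, inv_mul_eq_div, mul_div_right_comm]
        rw [this]
        nlinarith [mul_nonneg (div_nonneg hGL (by positivity : (0:ℝ) ≤ G ^ 2)) hbv0]
      rw [hcoef]
      nlinarith [h1, h2]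
    rw [hvec]
    have hnn : (0:ℝ) ≤ (1 - lam / G) * ‖v‖ := mul_nonneg hsG (norm_nonneg _)
    have := (pow_le_pow_iff_left₀ (norm_nonneg _) hnn (two_ne_zero)).mp hsq
    exact this
  -- one-step bound
  have step : ∀ t, ‖w (t + 1) - wstar‖ ≤ κ * ‖w t - wstar‖ + Δ / G := by
    intro t
    have hvec : w (t + 1) - wstar
        = ((w t - (1 / G) • gradient F (w t)) - wstar) - (1 / G) • (gt t - gradient F (w t)) := by
      rw [hupd t, smul_sub]
      abel
    have h1 : ‖w (t + 1) - wstar‖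
        ≤ ‖(w t - (1 / G) • gradient F (w t)) - wstar‖ + ‖(1 / G) • (gt t - gradient F (w t))‖ := by
      rw [hvec]; exact norm_sub_le _ _
    have h2 : ‖(1 / G) • (gt t - gradient F (w t))‖ ≤ Δ / G := by
      rw [norm_smul, Real.norm_eq_abs, abs_of_pos (by positivity : (0:ℝ) < 1 / G)]
      calc (1 / G) * ‖gt t - gradient F (w t)‖ ≤ (1 / G) * Δ :=
            mul_le_mul_of_nonneg_left (herr t) (by positivity)
        _ = Δ / G := by ring
    have h3 := key (w t)
    have h4 : (1 - lam / G) * ‖w t - wstar‖ ≤ κ * ‖w t - wstar‖ :=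
      mul_le_mul_of_nonneg_right hκG (norm_nonneg _)
    linarith
  -- geometric sum bound
  have hΔG : (0:ℝ) ≤ Δ / G := by positivity
  have hsum_le : ∀ T : ℕ, ∑ k ∈ Finset.range T, κ ^ k ≤ (G + lam) / lam := by
    intro T
    have hgm := geom_sum_mul κ T
    have hu : 1 - κ = lam / (G + lam) := by rw [hκdef]; ring
    have hu0 : (0:ℝ) < lam / (G + lam) := by positivity
    have hκT : (0:ℝ) ≤ κ ^ T := pow_nonneg hκ0 T
    have h1 : (∑ k ∈ Finset.range T, κ ^ k) * (lam / (G + lam)) ≤ 1 := by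
      have : (∑ k ∈ Finset.range T, κ ^ k) * (lam / (G + lam))
          = -(κ ^ T - 1) := by rw [← hgm, ← hu]; ring
      rw [this]; linarith
    have h2 : (G + lam) / lam = 1 / (lam / (G + lam)) := by
      rw [one_div_div]
    rw [h2]
    exact (le_div_iff₀ hu0).mpr h1
  -- the main induction
  have hsum_nonneg : ∀ T : ℕ, (0:ℝ) ≤ ∑ k ∈ Finset.range T, κ ^ k := fun T =>
    Finset.sum_nonneg fun k _ => pow_nonneg hκ0 k
  have main : ∀ T : ℕ, ‖w T - wstar‖
      ≤ κ ^ T * ‖w 0 - wstar‖ + (Δ / G) * ∑ k ∈ Finset.range T, κ ^ k := by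
    intro T
    induction T with
    | zero => simp
    | succ T ih =>
      have h1 := step T
      have h2 : κ * ‖w T - wstar‖
          ≤ κ * (κ ^ T * ‖w 0 - wstar‖ + (Δ / G) * ∑ k ∈ Finset.range T, κ ^ k) :=
        mul_le_mul_of_nonneg_left ih hκ0
      have h3 : ∑ k ∈ Finset.range (T + 1), κ ^ k
          = κ * ∑ k ∈ Finset.range T, κ ^ k + 1 := geom_sum_succ
      calc ‖w (T + 1) - wstar‖ ≤ κ * ‖w T - wstar‖ + Δ / G := h1
        _ ≤ κ * (κ ^ T * ‖w 0 - wstar‖ + (Δ / G) * ∑ k ∈ Finset.range T, κ ^ k) + Δ / G := by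
            linarith
        _ = κ ^ (T + 1) * ‖w 0 - wstar‖
            + (Δ / G) * (κ * ∑ k ∈ Finset.range T, κ ^ k + 1) := by ring
        _ = κ ^ (T + 1) * ‖w 0 - wstar‖
            + (Δ / G) * ∑ k ∈ Finset.range (T + 1), κ ^ k := by rw [h3]
  intro T
  refine ⟨main T, ?_⟩
  have h1 := main T
  have h2 : (Δ / G) * ∑ k ∈ Finset.range T, κ ^ k ≤ (Δ / G) * ((G + lam) / lam) :=
    mul_le_mul_of_nonneg_left (hsum_le T) hΔG
  linarith
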